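/- If κ is a regular uncountable cardinal and 2^κ = κ⁺, then there exists a sequence ⟨C_i : i < κ⁺⟩ of club subsets of κ that is almost decreasing (i.e., for all i < j < κ⁺ the set C_j \ C_i is bounded in κ) and generating (i.e., for every club D ⊆ κ there is i < κ⁺ such that C_i \ D is bounded in κ). -/

import Mathlib

/-- `C` is a club (closed unbounded) subset of the ordinal `κ`. -/
def IsClubOrd (κ : Ordinal) (C : Set Ordinal) : Prop :=
  C ⊆ Set.Iio κ ∧
  (∀ a < κ, ∃ b ∈ C, a ≤ b) ∧
  (∀ a < κ, (C ∩ Set.Iio a).Nonempty → sSup (C ∩ Set.Iio a) = a → a ∈ C)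

/-- `S` is bounded below `κ`. -/
def BoundedIn (κ : Ordinal) (S : Set Ordinal) : Prop :=
  ∃ b < κ, ∀ x ∈ S, x < b


lemma unbdd_of_sSup {S : Set Ordinal} {a : Ordinal}
    (hne : S.Nonempty) (h : sSup S = a) : ∀ d < a, ∃ x ∈ S, d < x := by
  intro d hd
  by_contra hc
  push_neg at hc
  have : sSup S ≤ d := csSup_le hne hc
  exact absurd (h ▸ this) (not_le.mpr hd)

lemma sSup_eq_of_unbdd {S : Set Ordinal} {a : Ordinal} (hS : S ⊆ Set.Iio a)
    (hne : S.Nonempty) (h : ∀ d < a, ∃ x ∈ S, d < x) : sSup S = a := by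
  have hbdd : BddAbove S := ⟨a, fun x hx => le_of_lt (hS hx)⟩
  refine le_antisymm (csSup_le hne fun x hx => le_of_lt (hS hx)) ?_
  by_contra hc
  push_neg at hc
  obtain ⟨x, hx, hxs⟩ := h _ hc
  exact absurd (le_csSup hbdd hx) (not_le.mpr hxs)

/-- the diagonal intersection -/
def DiagSet (κo : Ordinal) (G : Ordinal → Set Ordinal) : Set Ordinal :=
  {α | α < κo ∧ ∀ ξ < α, α ∈ G ξ}

noncomputable def pickG (G : Ordinal.{u} → Set Ordinal.{u}) (ξ c : Ordinal.{u}) : Ordinal.{u} :=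
  open Classical in
  if h : ∃ b, b ∈ G ξ ∧ c + 1 ≤ b then h.choose else 0

section
variable {κ : Cardinal.{u}} {G : Ordinal.{u} → Set Ordinal.{u}}

lemma pickG_spec (hG : ∀ ξ < κ.ord, IsClubOrd κ.ord (G ξ)) {ξ c : Ordinal}
    (hξ : ξ < κ.ord) (hc : c + 1 < κ.ord) :
    pickG G ξ c ∈ G ξ ∧ c < pickG G ξ c := by
  have h : ∃ b, b ∈ G ξ ∧ c + 1 ≤ b := by
    obtain ⟨b, hb, hcb⟩ := (hG ξ hξ).2.1 (c + 1) hc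
    exact ⟨b, hb, hcb⟩
  rw [pickG, dif_pos h]
  exact ⟨h.choose_spec.1, lt_of_lt_of_le (Order.lt_succ c) h.choose_spec.2⟩

noncomputable def nxt (G : Ordinal.{u} → Set Ordinal.{u}) (c : Ordinal.{u}) : Ordinal.{u} :=
  max (c + 1) (Ordinal.bsup.{u,u} c (fun ξ _ => pickG G ξ c))

lemma lt_nxt (c : Ordinal) : c < nxt G c :=
  lt_of_lt_of_le (Order.lt_succ c) (le_max_left _ _)

lemma nxt_lt (hreg : κ.IsRegular) (hG : ∀ ξ < κ.ord, IsClubOrd κ.ord (G ξ))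
    {c : Ordinal} (hc : c < κ.ord) : nxt G c < κ.ord := by
  have hlim : Order.IsSuccLimit κ.ord := Cardinal.isSuccLimit_ord hreg.aleph0_le
  refine max_lt (hlim.add_one_lt hc) ?_
  refine Cardinal.bsup_lt_ord_of_isRegular hreg (Cardinal.lt_ord.mp hc) ?_
  intro ξ hξ
  exact (hG ξ (hξ.trans hc)).1 (pickG_spec hG (hξ.trans hc) (hlim.add_one_lt hc)).1
end

section
variable {κ : Cardinal.{u}} {G : Ordinal.{u} → Set Ordinal.{u}}

lemma exists_diag_mem (hreg : κ.IsRegular) (hunc : Cardinal.aleph0 < κ)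
    (hG : ∀ ξ < κ.ord, IsClubOrd κ.ord (G ξ)) {a : Ordinal} (ha : a < κ.ord) :
    ∃ b ∈ DiagSet κ.ord G, a ≤ b := by
  have hlim : Order.IsSuccLimit κ.ord := Cardinal.isSuccLimit_ord hreg.aleph0_le
  set f : ℕ → Ordinal.{u} := fun n => (nxt G)^[n] a with hf
  have hlt : ∀ n, f n < κ.ord := by
    intro n
    induction n with
    | zero => exact ha
    | succ n ih =>
      have : f (n + 1) = nxt G (f n) := Function.iterate_succ_apply' _ _ _
      rw [this]
      exact nxt_lt hreg hG ih
  have hstep : ∀ n, f n < f (n + 1) := by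
    intro n
    have : f (n + 1) = nxt G (f n) := Function.iterate_succ_apply' _ _ _
    rw [this]
    exact lt_nxt _
  have hmono : StrictMono f := strictMono_nat_of_lt_succ hstep
  set b : Ordinal.{u} := iSup f with hbdef
  have hb : b < κ.ord := by
    refine Cardinal.iSup_lt_ord_lift_of_isRegular hreg ?_ hlt
    · rwa [Cardinal.mk_nat, Cardinal.lift_aleph0]
  have hfb : ∀ n, f n < b := fun n => (hstep n).trans_le (Ordinal.le_iSup f (n + 1))
  have hab : a ≤ b := Ordinal.le_iSup f 0
  refine ⟨b, ⟨hb, ?_⟩, hab⟩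
  intro ξ hξb
  have hξκ : ξ < κ.ord := hξb.trans hb
  obtain ⟨n, hn⟩ : ∃ n, ξ < f n := Ordinal.lt_iSup_iff.mp hξb
  have key : ∀ m, n ≤ m →
      pickG G ξ (f m) ∈ G ξ ∩ Set.Iio b ∧ f m < pickG G ξ (f m) := by
    intro m hm
    obtain ⟨hmem, hlt'⟩ := pickG_spec hG hξκ (hlim.add_one_lt (hlt m))
    have h1 : pickG G ξ (f m) ≤ Ordinal.bsup.{u,u} (f m) (fun ξ' _ => pickG G ξ' (f m)) :=
      Ordinal.le_bsup _ ξ (hn.trans_le (hmono.monotone hm))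
    have h2 : pickG G ξ (f m) ≤ nxt G (f m) := h1.trans (le_max_right _ _)
    have h3 : pickG G ξ (f m) < b := by
      have : nxt G (f m) = f (m + 1) := (Function.iterate_succ_apply' _ _ _).symm
      exact (h2.trans this.le).trans_lt (hfb (m + 1))
    exact ⟨⟨hmem, h3⟩, hlt'⟩
  have hne : (G ξ ∩ Set.Iio b).Nonempty := ⟨_, (key n le_rfl).1⟩
  refine (hG ξ hξκ).2.2 b hb hne (sSup_eq_of_unbdd Set.inter_subset_right hne ?_)
  intro d hd
  obtain ⟨m, hm⟩ : ∃ m, d < f m := Ordinal.lt_iSup_iff.mp hd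
  refine ⟨pickG G ξ (f (max n m)), (key _ (le_max_left n m)).1, ?_⟩
  exact hm.trans_le ((hmono.monotone (le_max_right n m)).trans (key _ (le_max_left n m)).2.le)

lemma isClub_diag (hreg : κ.IsRegular) (hunc : Cardinal.aleph0 < κ)
    (hG : ∀ ξ < κ.ord, IsClubOrd κ.ord (G ξ)) :
    IsClubOrd κ.ord (DiagSet κ.ord G) := by
  refine ⟨fun x hx => hx.1, fun a ha => exists_diag_mem hreg hunc hG ha, ?_⟩
  intro a ha hne hsup
  have hunb := unbdd_of_sSup hne hsup
  refine ⟨ha, ?_⟩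
  intro ξ hξ
  have hξκ : ξ < κ.ord := hξ.trans ha
  have key : ∀ d < a, ∃ x ∈ G ξ ∩ Set.Iio a, d < x := by
    intro d hd
    obtain ⟨x, ⟨hxD, hxa⟩, hdx⟩ := hunb (max d ξ) (max_lt hd hξ)
    exact ⟨x, ⟨hxD.2 ξ ((le_max_right d ξ).trans_lt hdx), hxa⟩,
      (le_max_left d ξ).trans_lt hdx⟩
  obtain ⟨x, hx, _⟩ := key ξ hξ
  have hne' : (G ξ ∩ Set.Iio a).Nonempty := ⟨x, hx⟩
  exact (hG ξ hξκ).2.2 a ha hne' (sSup_eq_of_unbdd Set.inter_subset_right hne' key)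

lemma diag_diff_bounded (hreg : κ.IsRegular) {ξ : Ordinal} (hξ : ξ < κ.ord) :
    BoundedIn κ.ord (DiagSet κ.ord G \ G ξ) := by
  refine ⟨ξ + 1, (Cardinal.isSuccLimit_ord hreg.aleph0_le).add_one_lt hξ, ?_⟩
  intro x hx
  by_contra hc
  push_neg at hc
  exact hx.2 (hx.1.2 ξ (lt_of_lt_of_le (Order.lt_succ ξ) hc))
end

lemma isClub_Iio (κo : Ordinal.{u}) : IsClubOrd κo (Set.Iio κo) :=
  ⟨fun _ h => h, fun a ha => ⟨a, ha, le_rfl⟩, fun a ha _ _ => ha⟩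

section
open Cardinal
variable {κ : Cardinal.{u}}

lemma card_Iio_le {κ : Cardinal.{u}} (hκ : Cardinal.aleph0 ≤ κ) {i : Ordinal.{u}} (hi : i < (Order.succ κ).ord) :
    #(Set.Iio i ⊕ Set.Iio i) ≤ #(Set.Iio κ.ord) := by
  have h1 : #(Set.Iio i) = Cardinal.lift.{u+1} i.card := Ordinal.mk_Iio_ordinal i
  have h2 : i.card ≤ κ := by
    have := Cardinal.lt_ord.mp hi
    exact Order.lt_succ_iff.mp this
  have h3 : #(Set.Iio κ.ord) = Cardinal.lift.{u+1} κ := by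
    rw [Ordinal.mk_Iio_ordinal, Cardinal.card_ord]
  rw [Cardinal.mk_sum, Cardinal.lift_id, h1, h3]
  have h4 : Cardinal.lift.{u+1} i.card ≤ Cardinal.lift.{u+1} κ := Cardinal.lift_le.mpr h2
  calc Cardinal.lift.{u+1} i.card + Cardinal.lift.{u+1} i.card
      ≤ Cardinal.lift.{u+1} κ + Cardinal.lift.{u+1} κ := add_le_add h4 h4
    _ = Cardinal.lift.{u+1} κ := Cardinal.add_eq_self (by
        rw [← Cardinal.lift_aleph0.{u+1, u}]
        exact Cardinal.lift_le.mpr hκ)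

lemma exists_next (hreg : κ.IsRegular) (hunc : Cardinal.aleph0 < κ)
    (F1 F2 : Ordinal.{u} → Set Ordinal.{u}) {i : Ordinal.{u}} (hi : i < (Order.succ κ).ord)
    (h1 : ∀ j < i, IsClubOrd κ.ord (F1 j)) (h2 : ∀ j < i, IsClubOrd κ.ord (F2 j)) :
    ∃ E, IsClubOrd κ.ord E ∧
      ∀ j < i, BoundedIn κ.ord (E \ F1 j) ∧ BoundedIn κ.ord (E \ F2 j) := by
  obtain ⟨w⟩ : Nonempty ((Set.Iio i ⊕ Set.Iio i) ↪ Set.Iio κ.ord) :=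
    Cardinal.le_def _ _ |>.mp (card_Iio_le hreg.aleph0_le hi)
  classical
  set G : Ordinal.{u} → Set Ordinal.{u} := fun ξ =>
    if h : ∃ p : Set.Iio i ⊕ Set.Iio i, ((w p : Set.Iio κ.ord) : Ordinal) = ξ then
      (match h.choose with
        | Sum.inl j => F1 (j : Ordinal)
        | Sum.inr j => F2 (j : Ordinal))
    else Set.Iio κ.ord with hGdef
  have hG : ∀ ξ < κ.ord, IsClubOrd κ.ord (G ξ) := by
    intro ξ _
    simp only [hGdef]
    split
    · rename_i h
      rcases hh : h.choose with j | j
      · simp only [hh]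
        exact h1 j j.2
      · simp only [hh]
        exact h2 j j.2
    · exact isClub_Iio _
  have hGeq : ∀ p : Set.Iio i ⊕ Set.Iio i,
      G ((w p : Set.Iio κ.ord) : Ordinal) =
        (match p with
          | Sum.inl j => F1 (j : Ordinal)
          | Sum.inr j => F2 (j : Ordinal)) := by
    intro p
    have h : ∃ q : Set.Iio i ⊕ Set.Iio i,
        ((w q : Set.Iio κ.ord) : Ordinal) = ((w p : Set.Iio κ.ord) : Ordinal) := ⟨p, rfl⟩
    have hq : h.choose = p := w.injective (Subtype.ext h.choose_spec)
    simp only [hGdef]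
    rw [dif_pos h, hq]
  refine ⟨DiagSet κ.ord G, isClub_diag hreg hunc hG, ?_⟩
  intro j hj
  constructor
  · have := diag_diff_bounded (G := G) hreg (w (Sum.inl ⟨j, hj⟩)).2
    rwa [hGeq (Sum.inl ⟨j, hj⟩)] at this
  · have := diag_diff_bounded (G := G) hreg (w (Sum.inr ⟨j, hj⟩)).2
    rwa [hGeq (Sum.inr ⟨j, hj⟩)] at this

end

section
open Cardinal
variable {κ : Cardinal.{u}}

lemma exists_enum (hpow : (2 : Cardinal) ^ κ = Order.succ κ) :
    ∃ D : Ordinal.{u} → Set Ordinal.{u}, (∀ j, IsClubOrd κ.ord (D j)) ∧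
      ∀ E, IsClubOrd κ.ord E → ∃ j < (Order.succ κ).ord, D j = E := by
  classical
  set Clubs : Set (Set Ordinal.{u}) := {E | IsClubOrd κ.ord E} with hClubs
  have hinj : Function.Injective
      (fun E : Clubs => ({x | (x : Ordinal) ∈ (E : Set Ordinal)} : Set (Set.Iio κ.ord))) := by
    intro E E' h
    have h' : {x : Set.Iio κ.ord | (x : Ordinal) ∈ (E : Set Ordinal)} =
        {x : Set.Iio κ.ord | (x : Ordinal) ∈ (E' : Set Ordinal)} := h
    apply Subtype.ext
    ext x
    constructor
    · intro hx
      have hxκ : x < κ.ord := E.2.1 hx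
      have hmem : (⟨x, hxκ⟩ : Set.Iio κ.ord) ∈ {x : Set.Iio κ.ord | (x : Ordinal) ∈ (E : Set Ordinal)} := hx
      exact (Set.ext_iff.mp h' ⟨x, hxκ⟩).mp hmem
    · intro hx
      have hxκ : x < κ.ord := E'.2.1 hx
      have hmem : (⟨x, hxκ⟩ : Set.Iio κ.ord) ∈ {x : Set.Iio κ.ord | (x : Ordinal) ∈ (E' : Set Ordinal)} := hx
      exact (Set.ext_iff.mp h' ⟨x, hxκ⟩).mpr hmem
  have hcard : #Clubs ≤ #(Set.Iio (Order.succ κ).ord) := by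
    have h1 : #Clubs ≤ #(Set (Set.Iio κ.ord)) := Cardinal.mk_le_of_injective hinj
    have h2 : #(Set (Set.Iio κ.ord)) = 2 ^ Cardinal.lift.{u+1} κ := by
      rw [Cardinal.mk_set, Ordinal.mk_Iio_ordinal, Cardinal.card_ord]
    have h3 : (2 : Cardinal.{u+1}) ^ Cardinal.lift.{u+1} κ = Cardinal.lift.{u+1} (Order.succ κ) := by
      rw [← hpow, Cardinal.lift_power, Cardinal.lift_two]
    have h4 : #(Set.Iio (Order.succ κ).ord) = Cardinal.lift.{u+1} (Order.succ κ) := by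
      rw [Ordinal.mk_Iio_ordinal, Cardinal.card_ord]
    rw [h4, ← h3, ← h2]
    exact h1
  obtain ⟨f⟩ : Nonempty (Clubs ↪ Set.Iio (Order.succ κ).ord) := (Cardinal.le_def _ _).mp hcard
  have hne : Nonempty Clubs := ⟨⟨Set.Iio κ.ord, isClub_Iio _⟩⟩
  have hsurj : Function.Surjective (Function.invFun (⇑f)) :=
    Function.invFun_surjective f.injective
  refine ⟨fun j => if h : j < (Order.succ κ).ord then
      ((Function.invFun (⇑f) ⟨j, h⟩ : Clubs) : Set Ordinal) else Set.Iio κ.ord, ?_, ?_⟩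
  · intro j
    dsimp only
    split
    · exact (Function.invFun (⇑f) _).2
    · exact isClub_Iio _
  · intro E hE
    obtain ⟨x, hx⟩ := hsurj ⟨E, hE⟩
    refine ⟨x.1, x.2, ?_⟩
    dsimp only
    rw [dif_pos (show (x : Ordinal) < (Order.succ κ).ord from x.2)]
    simp only [Subtype.coe_eta, hx]

noncomputable def CSeq (κ : Cardinal.{u}) (D : Ordinal.{u} → Set Ordinal.{u}) :
    Ordinal.{u} → Set Ordinal.{u} :=
  WellFounded.fix wellFounded_lt (fun i rec =>
    open Classical in
    if h : ∃ E, IsClubOrd κ.ord E ∧ ∀ j, ∀ hj : j < i,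
        BoundedIn κ.ord (E \ rec j hj) ∧ BoundedIn κ.ord (E \ D j)
    then h.choose else Set.Iio κ.ord)

lemma cSeq_good (hreg : κ.IsRegular) (hunc : Cardinal.aleph0 < κ)
    {D : Ordinal.{u} → Set Ordinal.{u}} (hD : ∀ j, IsClubOrd κ.ord (D j)) :
    ∀ i, i < (Order.succ κ).ord → IsClubOrd κ.ord (CSeq κ D i) ∧
      ∀ j < i, BoundedIn κ.ord (CSeq κ D i \ CSeq κ D j) ∧
        BoundedIn κ.ord (CSeq κ D i \ D j) := by
  classical
  intro i
  induction i using Ordinal.induction with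
  | h i IH =>
    intro hi
    have hex : ∃ E, IsClubOrd κ.ord E ∧ ∀ j, ∀ hj : j < i,
        BoundedIn κ.ord (E \ CSeq κ D j) ∧ BoundedIn κ.ord (E \ D j) := by
      obtain ⟨E, hE, hEb⟩ := exists_next hreg hunc (CSeq κ D) D hi
        (fun j hj => (IH j hj (hj.trans hi)).1) (fun j _ => hD j)
      exact ⟨E, hE, fun j hj => hEb j hj⟩
    have key : CSeq κ D i = if h : ∃ E, IsClubOrd κ.ord E ∧ ∀ j, ∀ hj : j < i,
        BoundedIn κ.ord (E \ CSeq κ D j) ∧ BoundedIn κ.ord (E \ D j)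
        then h.choose else Set.Iio κ.ord := by
      conv_lhs => rw [CSeq]
      rw [WellFounded.fix_eq]
      rfl
    rw [key, dif_pos hex]
    exact ⟨hex.choose_spec.1, fun j hj => hex.choose_spec.2 j hj⟩

end


theorem stmt0 (κ : Cardinal) (hreg : κ.IsRegular) (hunc : Cardinal.aleph0 < κ)
    (hpow : (2 : Cardinal) ^ κ = Order.succ κ) :
    ∃ C : Ordinal → Set Ordinal,
      (∀ i < (Order.succ κ).ord, IsClubOrd κ.ord (C i)) ∧
      (∀ i j, i < j → j < (Order.succ κ).ord → BoundedIn κ.ord (C j \ C i)) ∧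
      (∀ D : Set Ordinal, IsClubOrd κ.ord D →
        ∃ i < (Order.succ κ).ord, BoundedIn κ.ord (C i \ D)) := by
  obtain ⟨D, hD, henum⟩ := exists_enum hpow
  have hgood := cSeq_good hreg hunc hD
  refine ⟨CSeq κ D, fun i hi => (hgood i hi).1, fun i j hij hj => (hgood j hj).2 i hij |>.1, ?_⟩
  intro E hE
  obtain ⟨j, hj, hDj⟩ := henum E hE
  have hlim : Order.IsSuccLimit (Order.succ κ).ord :=
    Cardinal.isSuccLimit_ord (hreg.aleph0_le.trans (Order.le_succ κ))
  have hj1 : j + 1 < (Order.succ κ).ord := hlim.add_one_lt hj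
  refine ⟨j + 1, hj1, ?_⟩
  have := (hgood (j + 1) hj1).2 j (lt_of_lt_of_le (Order.lt_succ j) le_rfl) |>.2
  rwa [hDj] at this
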